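/- Let C ⊆ ℝⁿ be nonempty with diameter bounded by D ≥ 0, let f : ℝⁿ → ℝ, and suppose there exists γ > 0 such that |f(x) − f(x̄) − Δ(x̄, x − x̄)| ≤ γ‖x − x̄‖² for all x, x̄ ∈ C, where Δ : ℝⁿ × ℝⁿ → ℝ satisfies Δ(x̄, 0) = 0 for all x̄. Given x_t ∈ C, v_t ∈ C with Δ(x_t, α_t(v_t − x_t)) ≤ 0, α_t ∈ (0,1], and x_{t+1} = (1 − α_t) x_t + α_t v_t, it holds that 0 ≤ −Δ(x_t, α_t(v_t − x_t))/α_t ≤ (f(x_t) − f(x_{t+1}))/α_t + α_t γ D². -/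
import Mathlib


theorem per_iteration_descent_estimate {n : ℕ}
    (C : Set (EuclideanSpace ℝ (Fin n))) (hCne : C.Nonempty) (hCconv : Convex ℝ C)
    (D : ℝ) (hD : 0 ≤ D) (hdiam : ∀ u ∈ C, ∀ w ∈ C, ‖u - w‖ ≤ D)
    (f : EuclideanSpace ℝ (Fin n) → ℝ)
    (Δ : EuclideanSpace ℝ (Fin n) → EuclideanSpace ℝ (Fin n) → ℝ)
    (hΔ0 : ∀ xbar, Δ xbar 0 = 0)
    (γ : ℝ) (hγ : 0 < γ)
    (happrox : ∀ x ∈ C, ∀ xbar ∈ C, |f x - f xbar - Δ xbar (x - xbar)| ≤ γ * ‖x - xbar‖ ^ 2)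
    (xt vt : EuclideanSpace ℝ (Fin n)) (hxt : xt ∈ C) (hvt : vt ∈ C)
    (αt : ℝ) (hαt : αt ∈ Set.Ioc (0 : ℝ) 1)
    (hneg : Δ xt (αt • (vt - xt)) ≤ 0)
    (xt1 : EuclideanSpace ℝ (Fin n)) (hstep : xt1 = (1 - αt) • xt + αt • vt) :
    0 ≤ -Δ xt (αt • (vt - xt)) / αt ∧
      -Δ xt (αt • (vt - xt)) / αt ≤ (f xt - f xt1) / αt + αt * γ * D ^ 2 := by
  obtain ⟨hα0, hα1⟩ := hαt
  have hx1C : xt1 ∈ C := by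
    rw [hstep]
    exact hCconv hxt hvt (by linarith) (le_of_lt hα0) (by ring)
  have hdiff : xt1 - xt = αt • (vt - xt) := by
    rw [hstep]; module
  have happ := happrox xt1 hx1C xt hxt
  rw [hdiff] at happ
  have hnorm : ‖αt • (vt - xt)‖ = αt * ‖vt - xt‖ := by
    rw [norm_smul, Real.norm_eq_abs, abs_of_pos hα0]
  have hvd : ‖vt - xt‖ ≤ D := hdiam vt hvt xt hxt
  have hnn : (0:ℝ) ≤ ‖vt - xt‖ := norm_nonneg _
  have hsq : ‖αt • (vt - xt)‖ ^ 2 ≤ αt ^ 2 * D ^ 2 := by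
    rw [hnorm, mul_pow]
    have : ‖vt - xt‖ ^ 2 ≤ D ^ 2 := pow_le_pow_left₀ hnn hvd 2
    nlinarith [sq_nonneg αt]
  have hkey : -Δ xt (αt • (vt - xt)) ≤ f xt - f xt1 + αt ^ 2 * γ * D ^ 2 := by
    have h1 := abs_le.1 happ
    nlinarith [h1.1, h1.2]
  constructor
  · exact div_nonneg (by linarith) (le_of_lt hα0)
  · rw [div_add' _ _ _ (ne_of_gt hα0), div_le_div_iff_of_pos_right hα0] at *
    nlinarith
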